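/- Let M_σ be the 9×9 integer matrix as above. Then M_σ is not of finite order: for every n ≥ 1, M_σⁿ ≠ I. -/
import Mathlib


open Matrix

/-- The Cremona action on `(d, m₁, …, m₈)` centered at the first four points,
as a 9×9 integer matrix in the basis `(H, E₁, …, E₈)`. -/
def Cremona : Matrix (Fin 9) (Fin 9) ℤ :=
  !![3,-1,-1,-1,-1,0,0,0,0;
     2, 0,-1,-1,-1,0,0,0,0;
     2,-1, 0,-1,-1,0,0,0,0;
     2,-1,-1, 0,-1,0,0,0,0;
     2,-1,-1,-1, 0,0,0,0,0;
     0, 0, 0, 0, 0,1,0,0,0;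
     0, 0, 0, 0, 0,0,1,0,0;
     0, 0, 0, 0, 0,0,0,1,0;
     0, 0, 0, 0, 0,0,0,0,1]

/-- The permutation `(d, m₁, …, m₈) ↦ (d, m₂, …, m₈, m₁)`. -/
def CyclicShift : Matrix (Fin 9) (Fin 9) ℤ :=
  !![1,0,0,0,0,0,0,0,0;
     0,0,1,0,0,0,0,0,0;
     0,0,0,1,0,0,0,0,0;
     0,0,0,0,1,0,0,0,0;
     0,0,0,0,0,1,0,0,0;
     0,0,0,0,0,0,1,0,0;
     0,0,0,0,0,0,0,1,0;
     0,0,0,0,0,0,0,0,1;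
     0,1,0,0,0,0,0,0,0]

/-- The Coxeter element `M_σ = P ∘ M`. -/
def Msigma : Matrix (Fin 9) (Fin 9) ℤ := CyclicShift * Cremona

def Urow : Matrix (Fin 1) (Fin 9) ℤ := !![-4,1,1,1,1,1,1,1,1]

def Wrow : Matrix (Fin 1) (Fin 9) ℤ := !![-8,1,2,3,4,3,2,1,0]

lemma Urow_mul : Urow * Msigma = Urow := by
  show Urow * (CyclicShift * Cremona) = Urow
  decide

lemma Wrow_mul : Wrow * Msigma = Wrow + Urow := by
  show Wrow * (CyclicShift * Cremona) = Wrow + Urow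
  decide

lemma Wrow_mul_pow (n : ℕ) : Wrow * Msigma ^ n = Wrow + (n : ℤ) • Urow := by
  induction n with
  | zero => simp
  | succ k ih =>
    rw [pow_succ, ← Matrix.mul_assoc, ih, Matrix.add_mul, Wrow_mul,
      Matrix.smul_mul, Urow_mul]
    push_cast
    rw [add_smul, one_smul, add_assoc, add_comm Urow]

/-- `M_σ` has infinite order: `M_σⁿ ≠ I` for every `n ≥ 1`. -/
theorem msigma_infinite_order : ∀ n : ℕ, 1 ≤ n → Msigma ^ n ≠ 1 := by
  intro n hn h
  have h2 := Wrow_mul_pow n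
  rw [h, Matrix.mul_one, left_eq_add] at h2
  have h3 := congrArg (fun A => A 0 0) h2
  simp [Urow] at h3
  omega
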